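/- arXiv:1403.3738 — 5 statements merged into one kernel-verified Lean document; each statement's English description precedes it below -/
import Mathlib

section
/- Let f : ℝⁿ → ℝ be a smooth convex function, let Ω₀ = {θ : f(θ) ≤ 0}, and define the projection operator Proj(θ, y) = y - (∇f/‖∇f‖)⟨∇f/‖∇f‖, y⟩ f(θ) when f(θ) > 0 and ∇f(θ)ᵀy > 0, and Proj(θ, y) = y otherwise. Then for any θ* ∈ Ω₀ and any θ, y ∈ ℝⁿ, (θ - θ*)ᵀ(Proj(θ, y) - y) ≤ 0. -/
open scoped RealInnerProductSpace Classical

/-- Projection operator associated to a convex function `f` with gradient `g`. -/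
noncomputable def projOp {n : ℕ} (f : EuclideanSpace ℝ (Fin n) → ℝ)
    (g : EuclideanSpace ℝ (Fin n) → EuclideanSpace ℝ (Fin n))
    (θ y : EuclideanSpace ℝ (Fin n)) : EuclideanSpace ℝ (Fin n) :=
  if 0 < f θ ∧ 0 < ⟪g θ, y⟫ then
    y - (f θ * (⟪g θ, y⟫ / ‖g θ‖ ^ 2)) • g θ
  else y

lemma grad_convex_ineq {n : ℕ} {f : EuclideanSpace ℝ (Fin n) → ℝ}
    {gθ θ : EuclideanSpace ℝ (Fin n)}
    (hconv : ConvexOn ℝ Set.univ f) (hgrad : HasGradientAt f gθ θ)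
    (x : EuclideanSpace ℝ (Fin n)) : ⟪gθ, x - θ⟫ ≤ f x - f θ := by
  set A : ℝ →ᵃ[ℝ] EuclideanSpace ℝ (Fin n) := AffineMap.lineMap θ x with hA
  have hφconv : ConvexOn ℝ Set.univ (f ∘ A) := by
    have := hconv.comp_affineMap A
    simpa using this
  have hline : HasDerivAt (fun t : ℝ => A t) (x - θ) 0 := by
    have : HasDerivAt (fun t : ℝ => θ + t • (x - θ)) ((1 : ℝ) • (x - θ)) 0 := by
      exact ((hasDerivAt_id (0:ℝ)).smul_const (x - θ)).const_add θ
    simpa [hA, AffineMap.lineMap_apply, one_smul, add_comm] using this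
  have hcomp : HasDerivAt (f ∘ A) ⟪gθ, x - θ⟫ 0 := by
    have hF := hgrad.hasFDerivAt
    have hF' : HasFDerivAt f ((InnerProductSpace.toDual ℝ _) gθ) (A (0:ℝ)) := by
      simpa [hA] using hF
    have := hF'.comp_hasDerivAt (0 : ℝ) hline
    simpa using this
  have hslope := hφconv.le_slope_of_hasDerivAt (Set.mem_univ (0:ℝ))
    (Set.mem_univ (1:ℝ)) one_pos hcomp
  have h0 : A (0:ℝ) = θ := by simp [hA]
  have h1 : A (1:ℝ) = x := by simp [hA]
  simpa [slope, h0, h1, Function.comp] using hslope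

theorem projection_operator_property {n : ℕ}
    (f : EuclideanSpace ℝ (Fin n) → ℝ)
    (g : EuclideanSpace ℝ (Fin n) → EuclideanSpace ℝ (Fin n))
    (hconv : ConvexOn ℝ Set.univ f)
    (hgrad : ∀ θ, HasGradientAt f (g θ) θ)
    (θ θs y : EuclideanSpace ℝ (Fin n))
    (hθs : f θs ≤ 0)
    (hg_ne : 0 < f θ → g θ ≠ 0) :
    ⟪θ - θs, projOp f g θ y - y⟫ ≤ 0 := by
  unfold projOp
  by_cases h : 0 < f θ ∧ 0 < ⟪g θ, y⟫
  · rw [if_pos h]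
    have hgne := hg_ne h.1
    have hc : 0 ≤ f θ * (⟪g θ, y⟫ / ‖g θ‖ ^ 2) := by
      have h1 : (0:ℝ) < f θ := h.1
      have h2 : (0:ℝ) < ⟪g θ, y⟫ := h.2
      have h3 : (0:ℝ) < ‖g θ‖ ^ 2 := by
        have := norm_pos_iff.mpr hgne
        positivity
      positivity
    have hkey : ⟪g θ, θs - θ⟫ ≤ 0 := by
      have := grad_convex_ineq hconv (hgrad θ) θs
      linarith [h.1]
    have hinner : 0 ≤ ⟪θ - θs, g θ⟫ := by
      have e : ⟪θ - θs, g θ⟫ = -⟪g θ, θs - θ⟫ := by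
        rw [real_inner_comm, ← inner_neg_right, neg_sub]
      rw [e]; linarith
    have : y - (f θ * (⟪g θ, y⟫ / ‖g θ‖ ^ 2)) • g θ - y
        = -((f θ * (⟪g θ, y⟫ / ‖g θ‖ ^ 2)) • g θ) := by abel
    rw [this, inner_neg_right, inner_smul_right]
    nlinarith
  · rw [if_neg h]
    simp
end

section
/- Let f : ℝⁿ → ℝ be smooth and convex, θ : [0,∞) → ℝⁿ solve the ODE θ̇(t) = Proj(θ(t), y(t)) with f(θ(0)) ≤ 1. Then f(θ(t)) ≤ 1 for all t ≥ 0, i.e., the trajectory remains in the set Ω₁ = {θ | f(θ) ≤ 1}. -/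
open scoped RealInnerProductSpace Classical

theorem projection_keeps_trajectory_in_sublevel_set {n : ℕ}
    (f : EuclideanSpace ℝ (Fin n) → ℝ)
    (g : EuclideanSpace ℝ (Fin n) → EuclideanSpace ℝ (Fin n))
    (hconv : ConvexOn ℝ Set.univ f)
    (hgrad : ∀ θ, HasGradientAt f (g θ) θ)
    (hg_cont : Continuous g) (hf_cont : Continuous f)
    (θ y : ℝ → EuclideanSpace ℝ (Fin n))
    (hy_cont : Continuous y)
    (hODE : ∀ t, 0 ≤ t → HasDerivAt θ (projOp f g (θ t) (y t)) t)
    (h0 : f (θ 0) ≤ 1) :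
    ∀ t, 0 ≤ t → f (θ t) ≤ 1 := by
  intro t ht
  set φ : ℝ → ℝ := fun s => f (θ s) with hφ
  set D : ℝ → ℝ := fun s => ⟪g (θ s), projOp f g (θ s) (y s)⟫ with hD
  -- derivative of φ on [0, ∞)
  have hderiv : ∀ x, 0 ≤ x → HasDerivAt φ (D x) x := by
    intro x hx
    have h1 : HasFDerivAt f (InnerProductSpace.toDual ℝ _ (g (θ x))) (θ x) := hgrad (θ x)
    have h2 := h1.comp_hasDerivAt x (hODE x hx)
    simpa [hφ, hD, Function.comp_def, InnerProductSpace.toDual_apply_apply] using h2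
  -- derivative is nonpositive where φ > 1
  have hDle : ∀ x, 0 ≤ x → 1 < φ x → D x ≤ 0 := by
    intro x hx hφx
    have hfpos : 0 < f (θ x) := lt_trans one_pos hφx
    by_cases hc : 0 < f (θ x) ∧ 0 < ⟪g (θ x), y x⟫
    · have hgne : g (θ x) ≠ 0 := by
        intro h
        rw [h] at hc
        simpa using hc.2
      have hnorm : ‖g (θ x)‖ ^ 2 ≠ 0 := pow_ne_zero _ (norm_ne_zero_iff.mpr hgne)
      have : D x = ⟪g (θ x), y x⟫ * (1 - f (θ x)) := by
        rw [hD]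
        simp only [projOp, if_pos hc, inner_sub_right, real_inner_smul_right,
          real_inner_self_eq_norm_sq]
        field_simp
      rw [this]
      apply mul_nonpos_of_nonneg_of_nonpos (le_of_lt hc.2)
      linarith
    · have : D x = ⟪g (θ x), y x⟫ := by rw [hD]; simp only [projOp, if_neg hc]
      rw [this]
      push_neg at hc
      exact hc hfpos
  -- barrier argument: φ x ≤ 1 + ε * exp x on [0, t]
  have key : ∀ ε > 0, φ t ≤ 1 + ε * Real.exp t := by
    intro ε hε
    have hB : ∀ x, HasDerivAt (fun x => 1 + ε * Real.exp x) (ε * Real.exp x) x := by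
      intro x
      simpa using ((Real.hasDerivAt_exp x).const_mul ε).const_add 1
    have hcont : ContinuousOn φ (Set.Icc 0 t) := by
      intro x hx
      exact ((hderiv x hx.1).continuousAt).continuousWithinAt
    have := image_le_of_deriv_right_lt_deriv_boundary (f' := D) hcont
      (fun x hx => (hderiv x hx.1).hasDerivWithinAt)
      (by simp only [hφ]; nlinarith [Real.exp_pos (0:ℝ), h0, hε]) hB
      (fun x hx hfx => by
        have h1 : 1 < φ x := by
          rw [hfx]; nlinarith [Real.exp_pos x]
        have := hDle x hx.1 h1
        nlinarith [Real.exp_pos x])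
    exact this (Set.mem_Icc.mpr ⟨ht, le_refl t⟩)
  -- conclude by letting ε → 0
  refine le_of_forall_pos_le_add ?_
  intro ε hε
  have hexp : 0 < Real.exp t := Real.exp_pos t
  have := key (ε / Real.exp t) (by positivity)
  calc f (θ t) = φ t := rfl
    _ ≤ 1 + ε / Real.exp t * Real.exp t := this
    _ = 1 + ε := by field_simp
end

section
/- Let Γ ∈ ℝ^{n×n} be symmetric positive definite, f : ℝⁿ → ℝ smooth and convex, and define the Γ-projection Proj_Γ(θ, y) = Γy - Γ(∇f∇fᵀ)/(∇fᵀΓ∇f) Γy f(θ) when f(θ) > 0 and ∇fᵀΓy > 0, else Proj_Γ(θ, y) = Γy. Then for any θ* with f(θ*) ≤ 0, (θ - θ*)ᵀ(Γ⁻¹ Proj_Γ(θ, y) - y) ≤ 0. -/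
open scoped Classical
open Matrix

/-- Convex gradient inequality. -/
lemma convex_grad_ineq {n : ℕ} (f : (Fin n → ℝ) → ℝ) (g : (Fin n → ℝ) → (Fin n → ℝ))
    (hconv : ConvexOn ℝ Set.univ f)
    (hgrad : ∀ θ, HasGradientAt (fun v : EuclideanSpace ℝ (Fin n) => f v)
      ((EuclideanSpace.equiv (Fin n) ℝ).symm (g θ))
      ((EuclideanSpace.equiv (Fin n) ℝ).symm θ))
    (θ θs : Fin n → ℝ) :
    g θ ⬝ᵥ (θs - θ) ≤ f θs - f θ := by
  set d : EuclideanSpace ℝ (Fin n) := (EuclideanSpace.equiv (Fin n) ℝ).symm (θs - θ)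
  have hF : HasFDerivAt (fun v : EuclideanSpace ℝ (Fin n) => f v)
      (InnerProductSpace.toDual ℝ _ ((EuclideanSpace.equiv (Fin n) ℝ).symm (g θ)))
      ((EuclideanSpace.equiv (Fin n) ℝ).symm θ) := (hgrad θ).hasFDerivAt
  have hline : HasDerivAt (fun t : ℝ => ((EuclideanSpace.equiv (Fin n) ℝ).symm θ) + t • d) d 0 := by
    simpa using ((hasDerivAt_id (0:ℝ)).smul_const d).const_add
      ((EuclideanSpace.equiv (Fin n) ℝ).symm θ)
  have hh : HasDerivAt (fun t : ℝ => f (θ + t • (θs - θ))) (g θ ⬝ᵥ (θs - θ)) 0 := by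
    have hF' : HasFDerivAt (fun v : EuclideanSpace ℝ (Fin n) => f v)
      (InnerProductSpace.toDual ℝ _ ((EuclideanSpace.equiv (Fin n) ℝ).symm (g θ)))
      (((EuclideanSpace.equiv (Fin n) ℝ).symm θ) + (0:ℝ) • d) := by simpa using hF
    have := hF'.comp_hasDerivAt 0 hline
    have hval : (InnerProductSpace.toDual ℝ _ ((EuclideanSpace.equiv (Fin n) ℝ).symm (g θ))) d
        = g θ ⬝ᵥ (θs - θ) := by
      simp only [InnerProductSpace.toDual_apply_apply, d]
      rw [show ((EuclideanSpace.equiv (Fin n) ℝ).symm (θs - θ) : EuclideanSpace ℝ (Fin n)) = (EuclideanSpace.equiv (Fin n) ℝ).symm θs - (EuclideanSpace.equiv (Fin n) ℝ).symm θ from rfl]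
      simp [PiLp.inner_apply, dotProduct, mul_sub, Finset.sum_sub_distrib]
      rw [← Finset.sum_sub_distrib]; exact Finset.sum_congr rfl (fun i _ => by ring)
    rw [hval] at this
    exact this
  -- now the 1-D convexity argument
  have hconv1 : ConvexOn ℝ Set.univ (fun t : ℝ => f (θ + t • (θs - θ))) := by
    have := hconv.comp_affineMap (AffineMap.lineMap (θ : Fin n → ℝ) θs)
    have heq : (fun t : ℝ => f (θ + t • (θs - θ))) = f ∘ (AffineMap.lineMap (θ : Fin n → ℝ) θs) := by
      funext t
      simp [AffineMap.lineMap_apply]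
      ring_nf
    rw [heq]
    simpa using this
  have := hconv1.le_slope_of_hasDerivAt (Set.mem_univ (0:ℝ)) (Set.mem_univ (1:ℝ)) one_pos hh
  simpa [slope_def_field] using this

/-- The Γ-projection operator associated to a convex function `f` with gradient `g`. -/
noncomputable def projGamma {n : ℕ} (Γ : Matrix (Fin n) (Fin n) ℝ)
    (f : (Fin n → ℝ) → ℝ) (g : (Fin n → ℝ) → (Fin n → ℝ))
    (θ y : Fin n → ℝ) : Fin n → ℝ :=
  if 0 < f θ ∧ 0 < g θ ⬝ᵥ Γ.mulVec y then
    Γ.mulVec y - (f θ * (g θ ⬝ᵥ Γ.mulVec y) / (g θ ⬝ᵥ Γ.mulVec (g θ))) • Γ.mulVec (g θ)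
  else Γ.mulVec y

theorem gamma_projection_property {n : ℕ}
    (Γ : Matrix (Fin n) (Fin n) ℝ) (hΓsymm : Γ.IsSymm) (hΓpos : Γ.PosDef)
    (f : (Fin n → ℝ) → ℝ) (g : (Fin n → ℝ) → (Fin n → ℝ))
    (hconv : ConvexOn ℝ Set.univ f)
    (hgrad : ∀ θ, HasGradientAt (fun v : EuclideanSpace ℝ (Fin n) => f v)
      ((EuclideanSpace.equiv (Fin n) ℝ).symm (g θ))
      ((EuclideanSpace.equiv (Fin n) ℝ).symm θ))
    (θ θs y : Fin n → ℝ)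
    (hθs : f θs ≤ 0)
    (hg_ne : 0 < f θ → g θ ≠ 0) :
    (θ - θs) ⬝ᵥ (Γ⁻¹.mulVec (projGamma Γ f g θ y) - y) ≤ 0 := by
  have hinv : Γ⁻¹ * Γ = 1 := Matrix.nonsing_inv_mul Γ (isUnit_iff_ne_zero.mpr hΓpos.det_pos.ne')
  have hΓy : Γ⁻¹.mulVec (Γ.mulVec y) = y := by
    rw [Matrix.mulVec_mulVec, hinv, Matrix.one_mulVec]
  unfold projGamma
  split_ifs with h
  · obtain ⟨hf, hA⟩ := h
    set c : ℝ := f θ * (g θ ⬝ᵥ Γ.mulVec y) / (g θ ⬝ᵥ Γ.mulVec (g θ))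
    have hB : 0 < g θ ⬝ᵥ Γ.mulVec (g θ) := by
      have := hΓpos.dotProduct_mulVec_pos (hg_ne hf)
      simpa using this
    have hc : 0 < c := div_pos (mul_pos hf hA) hB
    have hΓg : Γ⁻¹.mulVec (Γ.mulVec (g θ)) = g θ := by
      rw [Matrix.mulVec_mulVec, hinv, Matrix.one_mulVec]
    have hrw : Γ⁻¹.mulVec (Γ.mulVec y - c • Γ.mulVec (g θ)) - y = -(c • g θ) := by
      rw [Matrix.mulVec_sub, Matrix.mulVec_smul, hΓy, hΓg]
      abel
    rw [hrw]
    have hkey : g θ ⬝ᵥ (θs - θ) ≤ f θs - f θ := convex_grad_ineq f g hconv hgrad θ θs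
    have h1 : 0 < (θ - θs) ⬝ᵥ g θ := by
      have : g θ ⬝ᵥ (θs - θ) < 0 := lt_of_le_of_lt hkey (by linarith)
      have h2 : (θ - θs) ⬝ᵥ g θ = -(g θ ⬝ᵥ (θs - θ)) := by
        rw [dotProduct_comm]
        simp [dotProduct_sub, sub_dotProduct]
      rw [h2]; linarith
    have : (θ - θs) ⬝ᵥ -(c • g θ) = -(c * ((θ - θs) ⬝ᵥ g θ)) := by
      simp [dotProduct_smul, smul_eq_mul]
    rw [this]
    have := mul_pos hc h1
    linarith
  · rw [hΓy]
    simp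
end

section
/- For the error dynamics ė = A_m(α(t)) e + B K̃ᵀ(t) x with Lyapunov function V(e, K̃) = eᵀ P e + trace(K̃ᵀ Γ⁻¹ K̃), where P A_m(α) + A_m(α)ᵀ P ≤ -Q for all α, and the adaptive law K̇̂ = Proj_Γ(K̂, -x eᵀ P B) with K̃ = K̂ - K*, the derivative of V along trajectories satisfies V̇ ≤ -eᵀ Q e - 2 trace(K̃ᵀ Γ⁻¹ K̇*). -/
open Matrix

attribute [local instance] Matrix.normedAddCommGroup Matrix.normedSpace

private lemma hasDerivAt_dotForm {N : ℕ} (M : Matrix (Fin N) (Fin N) ℝ)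
    (f g : ℝ → Fin N → ℝ) (f' g' : Fin N → ℝ) (t : ℝ)
    (hf : ∀ i, HasDerivAt (fun s => f s i) (f' i) t)
    (hg : ∀ i, HasDerivAt (fun s => g s i) (g' i) t) :
    HasDerivAt (fun s => f s ⬝ᵥ M.mulVec (g s))
      (f' ⬝ᵥ M.mulVec (g t) + f t ⬝ᵥ M.mulVec g') t := by
  have hfun : (fun s => f s ⬝ᵥ M.mulVec (g s))
      = fun s => ∑ i, ∑ j, f s i * (M i j * g s j) := by
    funext s; simp [dotProduct, mulVec, Finset.mul_sum]
  have H : HasDerivAt (fun s => ∑ i, ∑ j, f s i * (M i j * g s j))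
      (∑ i, ∑ j, (f' i * (M i j * g t j) + f t i * (M i j * g' j))) t :=
    HasDerivAt.fun_sum fun i _ => HasDerivAt.fun_sum fun j _ =>
      (hf i).mul ((hg j).const_mul _)
  have hd : f' ⬝ᵥ M.mulVec (g t) + f t ⬝ᵥ M.mulVec g'
      = ∑ i, ∑ j, (f' i * (M i j * g t j) + f t i * (M i j * g' j)) := by
    simp [dotProduct, mulVec, Finset.mul_sum, Finset.sum_add_distrib]
  rw [hfun, hd]; exact H

private lemma hasDerivAt_traceForm {N m : ℕ} (G : Matrix (Fin N) (Fin N) ℝ)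
    (K : ℝ → Matrix (Fin N) (Fin m) ℝ) (K' : Matrix (Fin N) (Fin m) ℝ) (t : ℝ)
    (hK : ∀ i j, HasDerivAt (fun s => K s i j) (K' i j) t) :
    HasDerivAt (fun s => Matrix.trace ((K s)ᵀ * (G * K s)))
      (Matrix.trace (K'ᵀ * (G * K t)) + Matrix.trace ((K t)ᵀ * (G * K'))) t := by
  have hfun : (fun s => Matrix.trace ((K s)ᵀ * (G * K s)))
      = fun s => ∑ j, ∑ i, ∑ k, K s i j * (G i k * K s k j) := by
    funext s
    simp [Matrix.trace, Matrix.diag, Matrix.mul_apply, Finset.mul_sum]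
  have H : HasDerivAt (fun s => ∑ j, ∑ i, ∑ k, K s i j * (G i k * K s k j))
      (∑ j, ∑ i, ∑ k, (K' i j * (G i k * K t k j) + K t i j * (G i k * K' k j))) t :=
    HasDerivAt.fun_sum fun j _ => HasDerivAt.fun_sum fun i _ => HasDerivAt.fun_sum fun k _ =>
      (hK i j).mul ((hK k j).const_mul _)
  have hd : Matrix.trace (K'ᵀ * (G * K t)) + Matrix.trace ((K t)ᵀ * (G * K'))
      = ∑ j, ∑ i, ∑ k, (K' i j * (G i k * K t k j) + K t i j * (G i k * K' k j)) := by
    simp [Matrix.trace, Matrix.diag, Matrix.mul_apply, Finset.mul_sum,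
      Finset.sum_add_distrib]
  rw [hfun, hd]; exact H

private lemma dot_swap {N : ℕ} (M : Matrix (Fin N) (Fin N) ℝ) (a b : Fin N → ℝ) :
    a ⬝ᵥ M.mulVec b = b ⬝ᵥ Mᵀ.mulVec a := by
  rw [Matrix.dotProduct_mulVec, dotProduct_comm, ← Matrix.mulVec_transpose]

private lemma dot_eq_trace' {N m : ℕ} (K : Matrix (Fin N) (Fin m) ℝ)
    (w : Fin m → ℝ) (x : Fin N → ℝ) :
    w ⬝ᵥ (Kᵀ.mulVec x) = Matrix.trace (Kᵀ * vecMulVec x w) := by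
  simp [dotProduct, mulVec, vecMulVec, Matrix.trace, Matrix.diag,
    Matrix.mul_apply, Finset.mul_sum]
  exact Finset.sum_congr rfl fun k _ => Finset.sum_congr rfl fun l _ => by ring

theorem adaptive_lyapunov_derivative_bound {N m : ℕ}
    (P Q : Matrix (Fin N) (Fin N) ℝ) (hP : P.PosDef) (hQ : Q.PosDef)
    (Γ : Matrix (Fin N) (Fin N) ℝ) (hΓsymm : Γ.IsSymm) (hΓpos : Γ.PosDef)
    (A : ℝ → Matrix (Fin N) (Fin N) ℝ)
    (hLyap : ∀ t, (-Q - (P * A t + (A t)ᵀ * P)).PosSemidef)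
    (B : Matrix (Fin N) (Fin m) ℝ)
    (e x : ℝ → Fin N → ℝ)
    (Khat Ks Ks' Pr : ℝ → Matrix (Fin N) (Fin m) ℝ)
    -- error dynamics ė = A_m e + B K̃ᵀ x
    (he : ∀ t, HasDerivAt e
      ((A t).mulVec (e t) + B.mulVec ((Khat t - Ks t)ᵀ.mulVec (x t))) t)
    -- adaptive law: K̇̂ = Proj_Γ(K̂, Y) with Y = -x eᵀ P B
    (hKhat : ∀ t, HasDerivAt Khat (Pr t) t)
    (hKs : ∀ t, HasDerivAt Ks (Ks' t) t)
    (hProj : ∀ t,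
      Matrix.trace ((Khat t - Ks t)ᵀ *
        (Γ⁻¹ * Pr t - (-vecMulVec (x t) (vecMul (vecMul (e t) P) B)))) ≤ 0) :
    ∀ t, ∃ d,
      HasDerivAt (fun s => e s ⬝ᵥ P.mulVec (e s) +
        Matrix.trace ((Khat s - Ks s)ᵀ * (Γ⁻¹ * (Khat s - Ks s)))) d t ∧
      d ≤ -(e t ⬝ᵥ Q.mulVec (e t)) -
        2 * Matrix.trace ((Khat t - Ks t)ᵀ * (Γ⁻¹ * Ks' t)) := by
  intro t
  set e' : Fin N → ℝ :=
    (A t).mulVec (e t) + B.mulVec ((Khat t - Ks t)ᵀ.mulVec (x t)) with he'def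
  set Kt : Matrix (Fin N) (Fin m) ℝ := Khat t - Ks t with hKtdef
  set K' : Matrix (Fin N) (Fin m) ℝ := Pr t - Ks' t with hK'def
  have hei : ∀ i, HasDerivAt (fun s => e s i) (e' i) t :=
    fun i => hasDerivAt_pi.1 (he t) i
  have hKij : ∀ i j, HasDerivAt (fun s => (Khat s - Ks s) i j) (K' i j) t := by
    intro i j
    exact hasDerivAt_pi.1 (hasDerivAt_pi.1 ((hKhat t).sub (hKs t)) i) j
  have H1 := hasDerivAt_dotForm P e e e' e' t hei hei
  have H2 := hasDerivAt_traceForm Γ⁻¹ (fun s => Khat s - Ks s) K' t hKij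
  refine ⟨_, H1.add H2, ?_⟩
  -- symmetry facts
  have hPsymm : Pᵀ = P := by have := hP.1; simpa [Matrix.IsHermitian] using this
  have hGsymm : (Γ⁻¹)ᵀ = Γ⁻¹ := by
    rw [Matrix.transpose_nonsing_inv, hΓsymm.eq]
  -- first dot term symmetry
  have hdot1 : e' ⬝ᵥ P.mulVec (e t) = e t ⬝ᵥ P.mulVec e' := by
    rw [dot_swap, hPsymm]
  -- trace symmetry
  have htr1 : Matrix.trace (K'ᵀ * (Γ⁻¹ * Kt)) = Matrix.trace (Ktᵀ * (Γ⁻¹ * K')) := by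
    rw [← Matrix.trace_transpose, Matrix.transpose_mul, Matrix.transpose_mul,
      Matrix.transpose_transpose, hGsymm, Matrix.mul_assoc]
  -- split the dot term along e'
  have hsplit : e t ⬝ᵥ P.mulVec e'
      = e t ⬝ᵥ P.mulVec ((A t).mulVec (e t))
        + e t ⬝ᵥ P.mulVec (B.mulVec (Ktᵀ.mulVec (x t))) := by
    rw [he'def, Matrix.mulVec_add, dotProduct_add]
  -- Lyapunov bound
  have hL : 0 ≤ e t ⬝ᵥ ((-Q - (P * A t + (A t)ᵀ * P)).mulVec (e t)) := by
    have := (hLyap t).dotProduct_mulVec_nonneg (e t); simpa using this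
  have hLexp : 0 ≤ -(e t ⬝ᵥ Q.mulVec (e t))
      - (e t ⬝ᵥ (P * A t).mulVec (e t) + e t ⬝ᵥ ((A t)ᵀ * P).mulVec (e t)) := by
    have h2 : (-Q - (P * A t + (A t)ᵀ * P)).mulVec (e t)
        = -(Q.mulVec (e t)) - ((P * A t).mulVec (e t) + ((A t)ᵀ * P).mulVec (e t)) := by
      rw [Matrix.sub_mulVec, Matrix.add_mulVec, Matrix.neg_mulVec]
    rw [h2] at hL
    simpa [dotProduct_sub, dotProduct_add, dotProduct_neg] using hL
  have hAtP : e t ⬝ᵥ ((A t)ᵀ * P).mulVec (e t) = e t ⬝ᵥ (P * A t).mulVec (e t) := by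
    rw [dot_swap, Matrix.transpose_mul, Matrix.transpose_transpose, hPsymm]
  have hTermA : e t ⬝ᵥ P.mulVec ((A t).mulVec (e t)) = e t ⬝ᵥ (P * A t).mulVec (e t) := by
    rw [Matrix.mulVec_mulVec]
  -- cross term as trace
  have hTermB : e t ⬝ᵥ P.mulVec (B.mulVec (Ktᵀ.mulVec (x t)))
      = Matrix.trace (Ktᵀ * vecMulVec (x t) (vecMul (vecMul (e t) P) B)) := by
    rw [Matrix.dotProduct_mulVec, Matrix.dotProduct_mulVec, dot_eq_trace']
  -- trace derivative split
  have htrsplit : Matrix.trace (Ktᵀ * (Γ⁻¹ * K'))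
      = Matrix.trace (Ktᵀ * (Γ⁻¹ * Pr t)) - Matrix.trace (Ktᵀ * (Γ⁻¹ * Ks' t)) := by
    rw [hK'def, Matrix.mul_sub, Matrix.mul_sub, Matrix.trace_sub]
  -- projection inequality expanded
  have hProjExp : Matrix.trace (Ktᵀ * (Γ⁻¹ * Pr t))
      + Matrix.trace (Ktᵀ * vecMulVec (x t) (vecMul (vecMul (e t) P) B)) ≤ 0 := by
    have h := hProj t
    rw [sub_neg_eq_add, Matrix.mul_add, Matrix.trace_add] at h
    exact h
  rw [hdot1, htr1, hsplit, hTermA, hTermB, htrsplit]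
  linarith [hLexp, hAtP, hProjExp]
end

section
/- In the saturated sub-case II.b: if 2xᵀPB v̄ ≥ -v_min Z_B‖x‖, where v̄ = (v/‖v‖)‖v_d‖ + ṽ with ‖v_d‖ ≥ max(‖ṽ‖, v_min) and ‖v_d‖ > 0, then 2xᵀPB v + 3 Z_B ‖x‖ ‖v‖ ≥ 0, given that ‖xᵀPB‖ ≤ Z_B‖x‖. -/
open Matrix

/-- Euclidean norm of a plain vector. -/
noncomputable def enorm {k : ℕ} (w : Fin k → ℝ) : ℝ := Real.sqrt (w ⬝ᵥ w)

lemma enorm_nonneg {k : ℕ} (w : Fin k → ℝ) : 0 ≤ _root_.enorm w := Real.sqrt_nonneg _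

lemma dot_self_nonneg {k : ℕ} (w : Fin k → ℝ) : 0 ≤ w ⬝ᵥ w := by
  simp only [dotProduct]
  exact Finset.sum_nonneg fun i _ => mul_self_nonneg _

lemma enorm_sq {k : ℕ} (w : Fin k → ℝ) : _root_.enorm w ^ 2 = w ⬝ᵥ w :=
  Real.sq_sqrt (dot_self_nonneg w)

lemma abs_dot_le {k : ℕ} (a b : Fin k → ℝ) : |a ⬝ᵥ b| ≤ _root_.enorm a * _root_.enorm b := by
  have h : (a ⬝ᵥ b) ^ 2 ≤ (_root_.enorm a * _root_.enorm b) ^ 2 := by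
    rw [mul_pow, enorm_sq, enorm_sq]
    have := Finset.sum_mul_sq_le_sq_mul_sq Finset.univ a b
    simpa [dotProduct, pow_two] using this
  calc |a ⬝ᵥ b| = Real.sqrt ((a ⬝ᵥ b) ^ 2) := (Real.sqrt_sq_eq_abs _).symm
    _ ≤ Real.sqrt ((_root_.enorm a * _root_.enorm b) ^ 2) := Real.sqrt_le_sqrt h
    _ = _root_.enorm a * _root_.enorm b := Real.sqrt_sq (mul_nonneg (enorm_nonneg a) (enorm_nonneg b))

lemma fin_enorm_pos {k : ℕ} {w : Fin k → ℝ} (hw : w ≠ 0) : 0 < _root_.enorm w := by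
  rw [_root_.enorm, Real.sqrt_pos]
  rcases (dot_self_nonneg w).lt_or_eq with h | h
  · exact h
  · exfalso
    apply hw
    funext i
    have := dotProduct_self_eq_zero.mp h.symm
    exact congrFun this i

theorem subcase_IIb_inequality {N m : ℕ}
    (P : Matrix (Fin N) (Fin N) ℝ) (B : Matrix (Fin N) (Fin m) ℝ)
    (x : Fin N → ℝ) (v vd vtil : Fin m → ℝ)
    (ZB vmin : ℝ) (hZB : 0 < ZB) (hvmin : 0 < vmin)
    (hv : v ≠ 0)
    -- Z_B bound on the row vector xᵀPB
    (hZBbound : _root_.enorm (vecMul (vecMul x P) B) ≤ ZB * _root_.enorm x)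
    -- direction-preserving decomposition v̄ = (v/‖v‖)‖v_d‖ + ṽ
    (hvd_dir : vd = (_root_.enorm vd / _root_.enorm v) • v)
    (hvd_pos : 0 < _root_.enorm vd)
    (hvd_ge_vmin : vmin ≤ _root_.enorm vd)
    (hvd_ge_vtil : _root_.enorm vtil ≤ _root_.enorm vd)
    -- sub-case II.b condition: 2xᵀPB v̄ ≥ -v_min Z_B ‖x‖
    (hcase : 2 * (vecMul (vecMul x P) B ⬝ᵥ (vd + vtil)) ≥
      -(vmin * ZB * _root_.enorm x)) :
    2 * (vecMul (vecMul x P) B ⬝ᵥ v) + 3 * ZB * _root_.enorm x * _root_.enorm v ≥ 0 := by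
  set w := vecMul (vecMul x P) B with hw
  have hvpos : 0 < _root_.enorm v := fin_enorm_pos hv
  have hxnn : 0 ≤ _root_.enorm x := enorm_nonneg x
  -- w ⬝ᵥ vd = (‖vd‖/‖v‖) * (w ⬝ᵥ v)
  have hdotvd : w ⬝ᵥ vd = (_root_.enorm vd / _root_.enorm v) * (w ⬝ᵥ v) := by
    conv_lhs => rw [hvd_dir]
    rw [dotProduct_smul, smul_eq_mul]
  -- bound on w ⬝ᵥ vtil
  have hvtil : w ⬝ᵥ vtil ≤ ZB * _root_.enorm x * _root_.enorm vd := by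
    have h1 : |w ⬝ᵥ vtil| ≤ _root_.enorm w * _root_.enorm vtil := abs_dot_le w vtil
    have h2 : _root_.enorm w * _root_.enorm vtil ≤ ZB * _root_.enorm x * _root_.enorm vd :=
      mul_le_mul hZBbound hvd_ge_vtil (enorm_nonneg _)
        (mul_nonneg hZB.le hxnn)
    nlinarith [le_abs_self (w ⬝ᵥ vtil)]
  -- from hcase: 2 * (‖vd‖/‖v‖) * (w⬝ᵥv) ≥ -(vmin ZB ‖x‖) - 2*(w⬝ᵥvtil)
  have hkey : 2 * (_root_.enorm vd / _root_.enorm v) * (w ⬝ᵥ v) ≥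
      -(vmin * ZB * _root_.enorm x) - 2 * (ZB * _root_.enorm x * _root_.enorm vd) := by
    rw [dotProduct_add] at hcase
    rw [hdotvd] at hcase
    nlinarith [hvtil, hcase]
  -- multiply by ‖v‖/‖vd‖
  have hfrac : _root_.enorm vd / _root_.enorm v > 0 := div_pos hvd_pos hvpos
  have hmain : 2 * (w ⬝ᵥ v) ≥
      -(vmin * ZB * _root_.enorm x) * (_root_.enorm v / _root_.enorm vd)
      - 2 * (ZB * _root_.enorm x * _root_.enorm v) := by
    have := mul_le_mul_of_nonneg_left hkey (le_of_lt (div_pos hvpos hvd_pos))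
    have hcalc : (_root_.enorm v / _root_.enorm vd) * (2 * (_root_.enorm vd / _root_.enorm v) * (w ⬝ᵥ v))
        = 2 * (w ⬝ᵥ v) := by
      field_simp
    rw [hcalc] at this
    calc 2 * (w ⬝ᵥ v)
        ≥ (_root_.enorm v / _root_.enorm vd) * (-(vmin * ZB * _root_.enorm x) - 2 * (ZB * _root_.enorm x * _root_.enorm vd)) :=
          this
      _ = -(vmin * ZB * _root_.enorm x) * (_root_.enorm v / _root_.enorm vd)
          - 2 * (ZB * _root_.enorm x * _root_.enorm v) * (_root_.enorm vd / _root_.enorm vd) := by ring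
      _ = _ := by rw [div_self hvd_pos.ne']; ring
  -- vmin/‖vd‖ ≤ 1
  have hratio : vmin * (_root_.enorm v / _root_.enorm vd) ≤ _root_.enorm v := by
    rw [div_eq_mul_inv]
    have : vmin * (_root_.enorm v * (_root_.enorm vd)⁻¹) = (vmin / _root_.enorm vd) * _root_.enorm v := by
      field_simp
    rw [this]
    have h1 : vmin / _root_.enorm vd ≤ 1 := (div_le_one hvd_pos).mpr hvd_ge_vmin
    nlinarith
  have hx : vmin * ZB * _root_.enorm x * (_root_.enorm v / _root_.enorm vd) ≤ ZB * _root_.enorm x * _root_.enorm v := by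
    nlinarith [mul_le_mul_of_nonneg_left hratio (mul_nonneg hZB.le hxnn)]
  linarith
end
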